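/- Let M be a (0,1) square matrix with exactly k = m² + ℓ ones, where 1 ≤ ℓ ≤ 2m. Then the spectral radius of M is at most (m + √(m² + 2ℓ))/2. -/

import Mathlib

set_option maxHeartbeats 1000000

open Matrix Finset

namespace FriedlandAux

/-- Two-dimensional Cauchy–Schwarz. -/
lemma cs2 (a b c e : ℝ) :
    a * c + b * e ≤ Real.sqrt (a ^ 2 + b ^ 2) * Real.sqrt (c ^ 2 + e ^ 2) := by
  have h1 : a * c + b * e ≤ |a * c + b * e| := le_abs_self _
  have h3 : (a * c + b * e) ^ 2 ≤ (a ^ 2 + b ^ 2) * (c ^ 2 + e ^ 2) := by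
    nlinarith [sq_nonneg (a * e - b * c)]
  calc a * c + b * e ≤ |a * c + b * e| := h1
    _ = Real.sqrt ((a * c + b * e) ^ 2) := (Real.sqrt_sq_eq_abs _).symm
    _ ≤ Real.sqrt ((a ^ 2 + b ^ 2) * (c ^ 2 + e ^ 2)) := Real.sqrt_le_sqrt h3
    _ = _ := Real.sqrt_mul (by positivity) _

/-- Fiberwise Cauchy–Schwarz bound for a sum of products over a set of pairs. -/
lemma sum_pairs_le {d : ℕ} (w : Fin d → ℝ) (hw : ∀ i, 0 ≤ w i)
    (S : Finset (Fin d × Fin d)) (A B : Finset (Fin d))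
    (hS : ∀ p ∈ S, p.1 ∈ A ∧ p.2 ∈ B) :
    ∑ p ∈ S, w p.1 * w p.2 ≤
      Real.sqrt S.card * (Real.sqrt (∑ i ∈ A, w i ^ 2) * Real.sqrt (∑ j ∈ B, w j ^ 2)) := by
  classical
  set X := ∑ i ∈ A, w i ^ 2 with hX
  have hX0 : 0 ≤ X := Finset.sum_nonneg fun i _ => sq_nonneg _
  have hmaps : ∀ p ∈ S, p.2 ∈ B := fun p hp => (hS p hp).2
  rw [← Finset.sum_fiberwise_of_maps_to hmaps (fun p => w p.1 * w p.2)]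
  have inner : ∀ j ∈ B, ∑ p ∈ S.filter (fun p => p.2 = j), w p.1 * w p.2
      ≤ (Real.sqrt ((S.filter (fun p => p.2 = j)).card) * w j) * Real.sqrt X := by
    intro j hj
    set F := S.filter (fun p => p.2 = j) with hF
    have h1 : ∑ p ∈ F, w p.1 * w p.2 = (∑ p ∈ F, w p.1) * w j := by
      rw [Finset.sum_mul]
      refine Finset.sum_congr rfl fun p hp => ?_
      have hp2 : p.2 = j := (Finset.mem_filter.mp hp).2
      rw [hp2]
    rw [h1]
    have hinj : ∀ x ∈ F, ∀ y ∈ F, x.1 = y.1 → x = y := by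
      intro p hp q hq hpq
      have hp2 : p.2 = j := (Finset.mem_filter.mp hp).2
      have hq2 : q.2 = j := (Finset.mem_filter.mp hq).2
      exact Prod.ext hpq (hp2.trans hq2.symm)
    have h3 : ∑ p ∈ F, w p.1 ^ 2 ≤ X := by
      have himg : ∑ i ∈ F.image Prod.fst, w i ^ 2 = ∑ p ∈ F, w p.1 ^ 2 :=
        Finset.sum_image hinj
      rw [← himg, hX]
      refine Finset.sum_le_sum_of_subset_of_nonneg ?_ fun i _ _ => sq_nonneg _
      intro i hi
      obtain ⟨p, hp, rfl⟩ := Finset.mem_image.mp hi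
      exact (hS p (Finset.mem_filter.mp hp).1).1
    have h2 : (∑ p ∈ F, w p.1) ≤ Real.sqrt F.card * Real.sqrt X := by
      have hnn : 0 ≤ ∑ p ∈ F, w p.1 := Finset.sum_nonneg fun p _ => hw _
      have hsq : (∑ p ∈ F, w p.1) ^ 2 ≤ (F.card : ℝ) * X := by
        calc (∑ p ∈ F, w p.1) ^ 2 ≤ (F.card : ℝ) * ∑ p ∈ F, w p.1 ^ 2 :=
              sq_sum_le_card_mul_sum_sq
          _ ≤ (F.card : ℝ) * X := mul_le_mul_of_nonneg_left h3 (by positivity)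
      calc (∑ p ∈ F, w p.1) = Real.sqrt ((∑ p ∈ F, w p.1) ^ 2) := (Real.sqrt_sq hnn).symm
        _ ≤ Real.sqrt ((F.card : ℝ) * X) := Real.sqrt_le_sqrt hsq
        _ = Real.sqrt F.card * Real.sqrt X := Real.sqrt_mul (by positivity) _
    calc (∑ p ∈ F, w p.1) * w j ≤ (Real.sqrt F.card * Real.sqrt X) * w j :=
          mul_le_mul_of_nonneg_right h2 (hw j)
      _ = (Real.sqrt F.card * w j) * Real.sqrt X := by ring
  have houter : ∑ j ∈ B, Real.sqrt ((S.filter (fun p => p.2 = j)).card) * w j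
      ≤ Real.sqrt (∑ j ∈ B, ((S.filter (fun p => p.2 = j)).card : ℝ)) *
        Real.sqrt (∑ j ∈ B, w j ^ 2) := by
    have hcs := Real.sum_mul_le_sqrt_mul_sqrt B
      (fun j => Real.sqrt ((S.filter (fun p => p.2 = j)).card)) w
    have he : ∑ j ∈ B, Real.sqrt ((S.filter (fun p => p.2 = j)).card) ^ 2
        = ∑ j ∈ B, ((S.filter (fun p => p.2 = j)).card : ℝ) :=
      Finset.sum_congr rfl fun j _ => Real.sq_sqrt (Nat.cast_nonneg _)
    rwa [he] at hcs
  have hcnt : ∑ j ∈ B, ((S.filter (fun p => p.2 = j)).card : ℝ) = (S.card : ℝ) := by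
    rw [← Nat.cast_sum]
    exact_mod_cast congrArg (Nat.cast : ℕ → ℝ)
      (Finset.card_eq_sum_card_fiberwise hmaps).symm
  calc ∑ j ∈ B, ∑ p ∈ S.filter (fun p => p.2 = j), w p.1 * w p.2
      ≤ ∑ j ∈ B, (Real.sqrt ((S.filter (fun p => p.2 = j)).card) * w j) * Real.sqrt X :=
        Finset.sum_le_sum inner
    _ = (∑ j ∈ B, Real.sqrt ((S.filter (fun p => p.2 = j)).card) * w j) * Real.sqrt X := by
        rw [Finset.sum_mul]
    _ ≤ (Real.sqrt (∑ j ∈ B, ((S.filter (fun p => p.2 = j)).card : ℝ)) *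
          Real.sqrt (∑ j ∈ B, w j ^ 2)) * Real.sqrt X := by
        refine mul_le_mul_of_nonneg_right houter (Real.sqrt_nonneg _)
    _ = Real.sqrt S.card * (Real.sqrt X * Real.sqrt (∑ j ∈ B, w j ^ 2)) := by
        rw [hcnt]; ring

/-- The exchange step: any set of pairs can be replaced by one of the same cardinality,
with at least as large weight, all of whose pairs touch the heavy set `T`. -/
lemma exchange {d m ℓ : ℕ} (hm : 1 ≤ m) (hl2 : ℓ ≤ 2 * m) (w : Fin d → ℝ) (hw : ∀ i, 0 ≤ w i)
    (T : Finset (Fin d)) (hT : T.card = m)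
    (hTmax : ∀ a ∈ T, ∀ j, j ∉ T → w j ≤ w a) :
    ∀ n (S : Finset (Fin d × Fin d)), S.card = m ^ 2 + ℓ →
      (S.filter fun p => p.1 ∉ T ∧ p.2 ∉ T).card ≤ n →
      ∃ S' : Finset (Fin d × Fin d), S'.card = m ^ 2 + ℓ ∧
        (∀ p ∈ S', p.1 ∈ T ∨ p.2 ∈ T) ∧
        ∑ p ∈ S, w p.1 * w p.2 ≤ ∑ p ∈ S', w p.1 * w p.2 := by
  classical
  intro n
  induction n with
  | zero =>
    intro S hcard hbad
    refine ⟨S, hcard, ?_, le_refl _⟩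
    intro p hp
    by_contra h
    push_neg at h
    have hmem : p ∈ S.filter fun p => p.1 ∉ T ∧ p.2 ∉ T :=
      Finset.mem_filter.mpr ⟨hp, h.1, h.2⟩
    have : 0 < (S.filter fun p => p.1 ∉ T ∧ p.2 ∉ T).card :=
      Finset.card_pos.mpr ⟨p, hmem⟩
    omega
  | succ n ih =>
    intro S hcard hbad
    by_cases hb : (S.filter fun p => p.1 ∉ T ∧ p.2 ∉ T).card ≤ n
    · exact ih S hcard hb
    have hne : (S.filter fun p => p.1 ∉ T ∧ p.2 ∉ T).Nonempty :=
      Finset.card_pos.mp (by omega)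
    obtain ⟨⟨i, j⟩, hbadmem⟩ := hne
    have hij := Finset.mem_filter.mp hbadmem
    have hijS : (i, j) ∈ S := hij.1
    have hiT : i ∉ T := hij.2.1
    have hjT : j ∉ T := hij.2.2
    set C : Finset (Fin d × Fin d) := (T ×ˢ T ∪ T ×ˢ {j}) ∪ {i} ×ˢ T with hC
    have hd1 : Disjoint (T ×ˢ T) (T ×ˢ ({j} : Finset (Fin d))) := by
      rw [Finset.disjoint_left]
      rintro ⟨a, b⟩ hab hab'
      have h1 : b ∈ T := (Finset.mem_product.mp hab).2
      have h2 : b = j := Finset.mem_singleton.mp (Finset.mem_product.mp hab').2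
      exact hjT (h2 ▸ h1)
    have hd2 : Disjoint (T ×ˢ T ∪ T ×ˢ ({j} : Finset (Fin d)))
        (({i} : Finset (Fin d)) ×ˢ T) := by
      rw [Finset.disjoint_left]
      rintro ⟨a, b⟩ hab hab'
      have h2 : a = i := Finset.mem_singleton.mp (Finset.mem_product.mp hab').1
      rcases Finset.mem_union.mp hab with h | h
      · exact hiT (h2 ▸ (Finset.mem_product.mp h).1)
      · exact hiT (h2 ▸ (Finset.mem_product.mp h).1)
    have hCcard : C.card = m ^ 2 + 2 * m := by
      rw [hC, Finset.card_union_of_disjoint hd2, Finset.card_union_of_disjoint hd1]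
      simp [hT]
      ring
    have hijC : (i, j) ∉ C := by
      rw [hC]
      intro hmem
      rcases Finset.mem_union.mp hmem with h | h
      · rcases Finset.mem_union.mp h with h' | h'
        · exact hiT (Finset.mem_product.mp h').1
        · exact hiT (Finset.mem_product.mp h').1
      · exact hjT (Finset.mem_product.mp h).2
    have hnotsub : ¬ C ⊆ S := by
      intro hsub
      have hsub' : C ⊆ S.erase (i, j) := by
        intro c hc
        exact Finset.mem_erase.mpr ⟨fun hceq => hijC (hceq ▸ hc), hsub hc⟩
      have hle : C.card ≤ (S.erase (i, j)).card := Finset.card_le_card hsub'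
      rw [Finset.card_erase_of_mem hijS, hcard, hCcard] at hle
      omega
    obtain ⟨c, hcC, hcS⟩ := Finset.not_subset.mp hnotsub
    have hgood : c.1 ∈ T ∨ c.2 ∈ T := by
      rcases Finset.mem_union.mp hcC with h | h
      · rcases Finset.mem_union.mp h with h' | h'
        · exact Or.inl (Finset.mem_product.mp h').1
        · exact Or.inl (Finset.mem_product.mp h').1
      · exact Or.inr (Finset.mem_product.mp h).2
    have hkey : w i * w j ≤ w c.1 * w c.2 := by
      rcases Finset.mem_union.mp hcC with h | h
      · rcases Finset.mem_union.mp h with h' | h'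
        · obtain ⟨h1, h2⟩ := Finset.mem_product.mp h'
          exact mul_le_mul (hTmax c.1 h1 i hiT) (hTmax c.2 h2 j hjT) (hw j) (hw c.1)
        · obtain ⟨h1, h2⟩ := Finset.mem_product.mp h'
          have h2' : c.2 = j := Finset.mem_singleton.mp h2
          rw [h2']
          exact mul_le_mul_of_nonneg_right (hTmax c.1 h1 i hiT) (hw j)
      · obtain ⟨h1, h2⟩ := Finset.mem_product.mp h
        have h1' : c.1 = i := Finset.mem_singleton.mp h1
        rw [h1']
        exact mul_le_mul_of_nonneg_left (hTmax c.2 h2 j hjT) (hw i)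
    set S₂ : Finset (Fin d × Fin d) := insert c (S.erase (i, j)) with hS₂
    have hcerase : c ∉ S.erase (i, j) := fun h => hcS (Finset.mem_erase.mp h).2
    have hcard₂ : S₂.card = m ^ 2 + ℓ := by
      rw [hS₂, Finset.card_insert_of_notMem hcerase, Finset.card_erase_of_mem hijS, hcard]
      have h1m : 1 ≤ m ^ 2 := Nat.one_le_pow _ _ hm
      omega
    have hbad₂ : (S₂.filter fun p => p.1 ∉ T ∧ p.2 ∉ T).card ≤ n := by
      have hfe : S₂.filter (fun p => p.1 ∉ T ∧ p.2 ∉ T) =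
          (S.filter fun p => p.1 ∉ T ∧ p.2 ∉ T).erase (i, j) := by
        rw [hS₂, Finset.filter_insert]
        have hcg : ¬ (c.1 ∉ T ∧ c.2 ∉ T) := by
          rcases hgood with h | h
          · exact fun hcon => hcon.1 h
          · exact fun hcon => hcon.2 h
        rw [if_neg hcg, Finset.filter_erase]
      rw [hfe, Finset.card_erase_of_mem hbadmem]
      omega
    obtain ⟨S', hS'card, hS'good, hS'sum⟩ := ih S₂ hcard₂ hbad₂
    refine ⟨S', hS'card, hS'good, ?_⟩
    have hsum2 : ∑ p ∈ S, w p.1 * w p.2 ≤ ∑ p ∈ S₂, w p.1 * w p.2 := by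
      have e1 : (∑ p ∈ S.erase (i, j), w p.1 * w p.2) + w i * w j
          = ∑ p ∈ S, w p.1 * w p.2 := Finset.sum_erase_add _ _ hijS
      have e2 : ∑ p ∈ S₂, w p.1 * w p.2 =
          w c.1 * w c.2 + ∑ p ∈ S.erase (i, j), w p.1 * w p.2 := by
        rw [hS₂, Finset.sum_insert hcerase]
      rw [← e1, e2]
      linarith
    exact hsum2.trans hS'sum

/-- The final algebraic inequality. -/
lemma numeric (m ℓ b p q : ℕ) (hm : 1 ≤ m) (hl2 : ℓ ≤ 2 * m) (hb : b ≤ m ^ 2)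
    (hsum : b + p + q = m ^ 2 + ℓ) (a c : ℝ) (ha : 0 ≤ a) (hc : 0 ≤ c)
    (hac : a ^ 2 + c ^ 2 = 1) :
    Real.sqrt b * (a * a) + (Real.sqrt p + Real.sqrt q) * (a * c)
      ≤ ((m : ℝ) + Real.sqrt ((m : ℝ) ^ 2 + 2 * ℓ)) / 2 := by
  set sb := Real.sqrt b with hsb
  set β := Real.sqrt p + Real.sqrt q with hβ
  have hsb0 : 0 ≤ sb := Real.sqrt_nonneg _
  have hβ0 : 0 ≤ β := by positivity
  -- Step 1: bound by sb/2 + √(sb² + β²)/2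
  have h1 : sb * (a * a) + β * (a * c) ≤ sb / 2 + Real.sqrt (sb ^ 2 + β ^ 2) * (1 / 2) := by
    have hcs := cs2 sb β ((a ^ 2 - c ^ 2) / 2) (a * c)
    have h4 : ((a ^ 2 - c ^ 2) / 2) ^ 2 + (a * c) ^ 2 = ((1 : ℝ) / 2) ^ 2 := by
      linear_combination ((a ^ 2 + c ^ 2 + 1) / 4) * hac
    rw [h4] at hcs
    have h5 : Real.sqrt (((1 : ℝ) / 2) ^ 2) = 1 / 2 := Real.sqrt_sq (by norm_num)
    rw [h5] at hcs
    have hid : sb * (a * a) + β * (a * c)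
        = sb / 2 + (sb * ((a ^ 2 - c ^ 2) / 2) + β * (a * c)) := by
      linear_combination (sb / 2) * hac
    rw [hid]
    linarith
  -- Step 2
  have hpq : β ^ 2 ≤ (2 : ℝ) * ((p : ℝ) + (q : ℝ)) := by
    have h6 : Real.sqrt p ^ 2 = (p : ℝ) := Real.sq_sqrt (by positivity)
    have h7 : Real.sqrt q ^ 2 = (q : ℝ) := Real.sq_sqrt (by positivity)
    nlinarith [sq_nonneg (Real.sqrt p - Real.sqrt q)]
  have hsb2 : sb ^ 2 = (b : ℝ) := Real.sq_sqrt (by positivity)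
  have hcast : (b : ℝ) + (p : ℝ) + (q : ℝ) = (m : ℝ) ^ 2 + (ℓ : ℝ) := by
    exact_mod_cast congrArg (Nat.cast : ℕ → ℝ) hsum
  have h8 : Real.sqrt (sb ^ 2 + β ^ 2) ≤ Real.sqrt (2 * ((m : ℝ) ^ 2 + ℓ) - b) := by
    apply Real.sqrt_le_sqrt
    rw [hsb2]
    linarith
  -- Step 3: sb + √(2(m²+ℓ) - b) ≤ m + √(m² + 2ℓ)
  set s2 := Real.sqrt (2 * ((m : ℝ) ^ 2 + ℓ) - b) with hs2
  set s3 := Real.sqrt ((m : ℝ) ^ 2 + 2 * ℓ) with hs3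
  have hbRm : (b : ℝ) ≤ (m : ℝ) ^ 2 := by
    have : ((b : ℕ) : ℝ) ≤ ((m ^ 2 : ℕ) : ℝ) := Nat.cast_le.mpr hb
    push_cast at this
    linarith
  have hl0 : (0 : ℝ) ≤ (ℓ : ℝ) := Nat.cast_nonneg _
  have hs2sq : s2 ^ 2 = 2 * ((m : ℝ) ^ 2 + ℓ) - b := by
    rw [hs2]; exact Real.sq_sqrt (by linarith)
  have hs3sq : s3 ^ 2 = (m : ℝ) ^ 2 + 2 * ℓ := by
    rw [hs3]; exact Real.sq_sqrt (by positivity)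
  have hs20 : 0 ≤ s2 := Real.sqrt_nonneg _
  have hs30 : 0 ≤ s3 := Real.sqrt_nonneg _
  have hm1 : (1 : ℝ) ≤ (m : ℝ) := by exact_mod_cast hm
  have hsbm : sb ≤ (m : ℝ) := by nlinarith
  have hms3 : (m : ℝ) ≤ s3 := by nlinarith
  have hs3s2 : s3 ≤ s2 := by nlinarith
  have h9 : sb + s2 ≤ (m : ℝ) + s3 := by
    have hfac : (s2 - s3) * (s2 + s3) = ((m : ℝ) - sb) * ((m : ℝ) + sb) := by
      linear_combination hs2sq - hs3sq + hsb2
    have hpos : (0 : ℝ) < (m : ℝ) + sb := by linarith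
    have hstep : (s2 - s3) * ((m : ℝ) + sb) ≤ ((m : ℝ) - sb) * ((m : ℝ) + sb) := by
      calc (s2 - s3) * ((m : ℝ) + sb) ≤ (s2 - s3) * (s2 + s3) :=
            mul_le_mul_of_nonneg_left (by linarith) (by linarith)
        _ = ((m : ℝ) - sb) * ((m : ℝ) + sb) := hfac
    have := le_of_mul_le_mul_right hstep hpos
    linarith
  calc sb * (a * a) + β * (a * c) ≤ sb / 2 + Real.sqrt (sb ^ 2 + β ^ 2) * (1 / 2) := h1
    _ ≤ sb / 2 + s2 * (1 / 2) := by linarith [h8]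
    _ ≤ ((m : ℝ) + s3) / 2 := by linarith

/-- The combinatorial core: a sum of products of unit-norm nonnegative weights over
`m² + ℓ` pairs is at most `(m + √(m² + 2ℓ))/2`. -/
lemma core {d m ℓ : ℕ} (hm : 1 ≤ m) (hl1 : 1 ≤ ℓ) (hl2 : ℓ ≤ 2 * m)
    (w : Fin d → ℝ) (hw : ∀ i, 0 ≤ w i) (hnorm : ∑ i, w i ^ 2 = 1)
    (S : Finset (Fin d × Fin d)) (hScard : S.card = m ^ 2 + ℓ) :
    ∑ p ∈ S, w p.1 * w p.2 ≤ ((m : ℝ) + Real.sqrt ((m : ℝ) ^ 2 + 2 * ℓ)) / 2 := by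
  classical
  -- m ≤ d
  have hmd : m ≤ d := by
    by_contra hcon
    push_neg at hcon
    have h1 : S.card ≤ d * d := by
      calc S.card ≤ (Finset.univ : Finset (Fin d × Fin d)).card := Finset.card_le_univ S
        _ = d * d := by simp
    have h2 : d * d ≤ m * m := Nat.mul_le_mul (by omega) (by omega)
    have h3 : m ^ 2 = m * m := sq m
    omega
  -- get the heavy set T
  have hP : ((Finset.univ : Finset (Fin d)).powersetCard m).Nonempty := by
    apply Finset.powersetCard_nonempty.mpr
    simpa using hmd
  obtain ⟨T, hTmem, hTmax'⟩ := Finset.exists_max_image _ (fun t => ∑ i ∈ t, w i) hP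
  have hTcard : T.card = m := (Finset.mem_powersetCard.mp hTmem).2
  have hTmax : ∀ a ∈ T, ∀ j, j ∉ T → w j ≤ w a := by
    intro a ha j hj
    by_contra hcon
    push_neg at hcon
    set T' : Finset (Fin d) := insert j (T.erase a) with hT'
    have hjT' : j ∉ T.erase a := fun h => hj (Finset.mem_erase.mp h).2
    have hT'card : T'.card = m := by
      rw [hT', Finset.card_insert_of_notMem hjT', Finset.card_erase_of_mem ha, hTcard]
      have : 1 ≤ T.card := Finset.card_pos.mpr ⟨a, ha⟩
      omega
    have hT'mem : T' ∈ (Finset.univ : Finset (Fin d)).powersetCard m :=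
      Finset.mem_powersetCard.mpr ⟨Finset.subset_univ _, hT'card⟩
    have hle := hTmax' T' hT'mem
    have e1 : (∑ i ∈ T.erase a, w i) + w a = ∑ i ∈ T, w i :=
      Finset.sum_erase_add _ _ ha
    have e2 : ∑ i ∈ T', w i = w j + ∑ i ∈ T.erase a, w i := by
      rw [hT', Finset.sum_insert hjT']
    rw [e2, ← e1] at hle
    linarith
  -- exchange
  obtain ⟨S', hS'card, hS'good, hS'sum⟩ := exchange hm hl2 w hw T hTcard hTmax
    (S.filter fun p => p.1 ∉ T ∧ p.2 ∉ T).card S hScard le_rfl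
  -- partition S'
  set SB := S'.filter (fun p => p.1 ∈ T ∧ p.2 ∈ T) with hSB
  set SR := S'.filter (fun p => p.1 ∈ T ∧ p.2 ∉ T) with hSR
  set SC := S'.filter (fun p => p.1 ∉ T) with hSC
  have hSCmem : ∀ p ∈ SC, p.1 ∉ T ∧ p.2 ∈ T := by
    intro p hp
    have h := Finset.mem_filter.mp hp
    exact ⟨h.2, (hS'good p h.1).resolve_left h.2⟩
  have hsplit1 : ∑ p ∈ S', w p.1 * w p.2 =
      (∑ p ∈ S'.filter (fun p => p.1 ∈ T), w p.1 * w p.2) + ∑ p ∈ SC, w p.1 * w p.2 :=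
    (Finset.sum_filter_add_sum_filter_not S' (fun p => p.1 ∈ T)
      (fun p => w p.1 * w p.2)).symm
  have hsplit2 : ∑ p ∈ S'.filter (fun p => p.1 ∈ T), w p.1 * w p.2 =
      (∑ p ∈ SB, w p.1 * w p.2) + ∑ p ∈ SR, w p.1 * w p.2 := by
    rw [hSB, hSR, ← Finset.filter_filter, ← Finset.filter_filter]
    exact (Finset.sum_filter_add_sum_filter_not (S'.filter (fun p => p.1 ∈ T))
      (fun p => p.2 ∈ T) (fun p => w p.1 * w p.2)).symm
  have hcards : SB.card + SR.card + SC.card = m ^ 2 + ℓ := by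
    have hc1 : (S'.filter (fun p => p.1 ∈ T)).card + SC.card = S'.card :=
      Finset.card_filter_add_card_filter_not _
    have hc2 : SB.card + SR.card = (S'.filter (fun p => p.1 ∈ T)).card := by
      rw [hSB, hSR, ← Finset.filter_filter, ← Finset.filter_filter]
      exact Finset.card_filter_add_card_filter_not _
    omega
  have hbcard : SB.card ≤ m ^ 2 := by
    have hsub : SB ⊆ T ×ˢ T := by
      intro p hp
      have h := Finset.mem_filter.mp hp
      exact Finset.mem_product.mpr ⟨h.2.1, h.2.2⟩
    calc SB.card ≤ (T ×ˢ T).card := Finset.card_le_card hsub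
      _ = m ^ 2 := by rw [Finset.card_product, hTcard]; ring
  -- masses
  set x := ∑ i ∈ T, w i ^ 2 with hx
  set y := ∑ i ∈ Tᶜ, w i ^ 2 with hy
  have hx0 : 0 ≤ x := Finset.sum_nonneg fun i _ => sq_nonneg _
  have hy0 : 0 ≤ y := Finset.sum_nonneg fun i _ => sq_nonneg _
  have hxy : x + y = 1 := by
    rw [hx, hy, Finset.sum_add_sum_compl, hnorm]
  -- bounds on the three parts
  have hB : ∑ p ∈ SB, w p.1 * w p.2 ≤
      Real.sqrt SB.card * (Real.sqrt x * Real.sqrt x) := by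
    apply sum_pairs_le w hw SB T T
    intro p hp
    have h := Finset.mem_filter.mp hp
    exact ⟨h.2.1, h.2.2⟩
  have hR : ∑ p ∈ SR, w p.1 * w p.2 ≤
      Real.sqrt SR.card * (Real.sqrt x * Real.sqrt y) := by
    apply sum_pairs_le w hw SR T Tᶜ
    intro p hp
    have h := Finset.mem_filter.mp hp
    exact ⟨h.2.1, Finset.mem_compl.mpr h.2.2⟩
  have hC : ∑ p ∈ SC, w p.1 * w p.2 ≤
      Real.sqrt SC.card * (Real.sqrt y * Real.sqrt x) := by
    apply sum_pairs_le w hw SC Tᶜ T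
    intro p hp
    obtain ⟨h1, h2⟩ := hSCmem p hp
    exact ⟨Finset.mem_compl.mpr h1, h2⟩
  -- finish with the numeric lemma
  have hnum := numeric m ℓ SB.card SR.card SC.card hm hl2 hbcard hcards
    (Real.sqrt x) (Real.sqrt y) (Real.sqrt_nonneg _) (Real.sqrt_nonneg _)
    (by rw [Real.sq_sqrt hx0, Real.sq_sqrt hy0]; exact hxy)
  calc ∑ p ∈ S, w p.1 * w p.2 ≤ ∑ p ∈ S', w p.1 * w p.2 := hS'sum
    _ = (∑ p ∈ SB, w p.1 * w p.2) + (∑ p ∈ SR, w p.1 * w p.2)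
        + ∑ p ∈ SC, w p.1 * w p.2 := by rw [hsplit1, hsplit2]
    _ ≤ Real.sqrt SB.card * (Real.sqrt x * Real.sqrt x)
        + Real.sqrt SR.card * (Real.sqrt x * Real.sqrt y)
        + Real.sqrt SC.card * (Real.sqrt y * Real.sqrt x) := by
          linarith [hB, hR, hC]
    _ = Real.sqrt SB.card * (Real.sqrt x * Real.sqrt x)
        + (Real.sqrt SR.card + Real.sqrt SC.card) * (Real.sqrt x * Real.sqrt y) := by ring
    _ ≤ ((m : ℝ) + Real.sqrt ((m : ℝ) ^ 2 + 2 * ℓ)) / 2 := hnum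

end FriedlandAux

/-- Friedland's bound: a `(0,1)` square matrix with exactly `k = m² + ℓ` ones,
`1 ≤ ℓ ≤ 2m`, has spectral radius at most `(m + √(m² + 2ℓ))/2`. -/
theorem friedland_spectral_bound (d m ℓ : ℕ) (hm : 1 ≤ m) (hl1 : 1 ≤ ℓ) (hl2 : ℓ ≤ 2 * m)
    (M : Matrix (Fin d) (Fin d) ℝ) (h01 : ∀ i j, M i j = 0 ∨ M i j = 1)
    (hones : (Finset.univ.filter fun p : Fin d × Fin d => M p.1 p.2 = 1).card = m ^ 2 + ℓ) :
    ∀ z : ℂ, (M.map (Complex.ofReal)).charpoly.IsRoot z →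
      ‖z‖ ≤ ((m : ℝ) + Real.sqrt ((m : ℝ) ^ 2 + 2 * ℓ)) / 2 := by
  classical
  intro z hz
  set A := M.map (Complex.ofReal) with hA
  -- from the root, get det (z • 1 - A) = 0
  have hdet : (z • (1 : Matrix (Fin d) (Fin d) ℂ) - A).det = 0 := by
    have h1 : Polynomial.eval z A.charpoly = 0 := hz
    rw [Matrix.charpoly, eval_det, Matrix.matPolyEquiv_charmatrix] at h1
    have h2 : Polynomial.eval (Matrix.scalar (Fin d) z)
        (Polynomial.X - Polynomial.C A) = z • (1 : Matrix (Fin d) (Fin d) ℂ) - A := by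
      rw [Polynomial.eval_sub, Polynomial.eval_X, Polynomial.eval_C]
      congr 1
      rw [Matrix.scalar_apply]
      ext i j
      by_cases hij : i = j
      · subst hij
        simp [Matrix.diagonal_apply_eq, Matrix.smul_apply, Matrix.one_apply_eq]
      · simp [Matrix.diagonal_apply_ne _ hij, Matrix.smul_apply, Matrix.one_apply_ne hij]
    rwa [h2] at h1
  obtain ⟨v, hv0, hv⟩ := Matrix.exists_mulVec_eq_zero_iff.mpr hdet
  have heig : A *ᵥ v = z • v := by
    have h3 : (z • (1 : Matrix (Fin d) (Fin d) ℂ)) *ᵥ v - A *ᵥ v = 0 := by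
      rw [← Matrix.sub_mulVec]; exact hv
    have h4 : (z • (1 : Matrix (Fin d) (Fin d) ℂ)) *ᵥ v = z • v := by
      rw [Matrix.smul_mulVec, Matrix.one_mulVec]
    rw [h4] at h3
    exact (eq_of_sub_eq_zero h3).symm
  set u : Fin d → ℝ := fun i => ‖v i‖ with hu
  have hu0 : ∀ i, 0 ≤ u i := fun i => norm_nonneg _
  have hM0 : ∀ i j, 0 ≤ M i j := by
    intro i j
    rcases h01 i j with h | h <;> rw [h] <;> norm_num
  set r := ‖z‖ with hr
  -- row inequality
  have hrow : ∀ i, r * u i ≤ ∑ j, M i j * u j := by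
    intro i
    have h5 : r * u i = ‖(A *ᵥ v) i‖ := by
      rw [heig, Pi.smul_apply, smul_eq_mul, norm_mul]
    rw [h5]
    have h6 : (A *ᵥ v) i = ∑ j, A i j * v j := rfl
    rw [h6]
    calc ‖∑ j, A i j * v j‖ ≤ ∑ j, ‖A i j * v j‖ :=
          norm_sum_le _ _
      _ = ∑ j, M i j * u j := by
          refine Finset.sum_congr rfl fun j _ => ?_
          rw [norm_mul]
          congr 1
          rw [hA]
          simp only [Matrix.map_apply, Complex.norm_real, Real.norm_eq_abs]
          exact abs_of_nonneg (hM0 i j)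
  -- sum up
  set U := ∑ i, u i ^ 2 with hU
  have hU0 : 0 < U := by
    obtain ⟨i, hi⟩ := Function.ne_iff.mp hv0
    apply Finset.sum_pos' (fun i _ => sq_nonneg _)
    refine ⟨i, Finset.mem_univ i, ?_⟩
    have habs : 0 < ‖v i‖ := norm_pos_iff.mpr hi
    exact pow_pos habs 2
  set S := Finset.univ.filter (fun p : Fin d × Fin d => M p.1 p.2 = 1) with hS
  have hsum1 : r * U ≤ ∑ p ∈ S, u p.1 * u p.2 := by
    have h7 : r * U = ∑ i, u i * (r * u i) := by
      rw [hU, Finset.mul_sum]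
      exact Finset.sum_congr rfl fun i _ => by ring
    rw [h7]
    have h8 : ∑ i, u i * (r * u i) ≤ ∑ i, u i * ∑ j, M i j * u j :=
      Finset.sum_le_sum fun i _ => mul_le_mul_of_nonneg_left (hrow i) (hu0 i)
    refine h8.trans (le_of_eq ?_)
    have h9 : ∑ i, u i * ∑ j, M i j * u j
        = ∑ p ∈ (Finset.univ ×ˢ Finset.univ : Finset (Fin d × Fin d)),
            M p.1 p.2 * (u p.1 * u p.2) := by
      rw [Finset.sum_product]
      refine Finset.sum_congr rfl fun i _ => ?_
      rw [Finset.mul_sum]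
      exact Finset.sum_congr rfl fun j _ => by ring
    rw [h9, Finset.univ_product_univ]
    rw [← Finset.sum_filter_add_sum_filter_not Finset.univ
      (fun p : Fin d × Fin d => M p.1 p.2 = 1) (fun p => M p.1 p.2 * (u p.1 * u p.2))]
    have h11 : ∑ p ∈ Finset.univ.filter (fun p : Fin d × Fin d => ¬ M p.1 p.2 = 1),
        M p.1 p.2 * (u p.1 * u p.2) = 0 := by
      apply Finset.sum_eq_zero
      intro p hp
      have hne := (Finset.mem_filter.mp hp).2
      rcases h01 p.1 p.2 with h | h
      · rw [h]; ring
      · exact absurd h hne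
    rw [h11, add_zero]
    refine Finset.sum_congr rfl fun p hp => ?_
    have he := (Finset.mem_filter.mp hp).2
    rw [he, one_mul]
  -- normalize
  set w : Fin d → ℝ := fun i => u i / Real.sqrt U with hwdef
  have hw0 : ∀ i, 0 ≤ w i := fun i => div_nonneg (hu0 i) (Real.sqrt_nonneg _)
  have hwnorm : ∑ i, w i ^ 2 = 1 := by
    have hwi : ∀ i, w i ^ 2 = u i ^ 2 / U := by
      intro i
      rw [hwdef]
      simp only
      rw [div_pow, Real.sq_sqrt hU0.le]
    calc ∑ i, w i ^ 2 = ∑ i, u i ^ 2 / U := Finset.sum_congr rfl fun i _ => hwi i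
      _ = (∑ i, u i ^ 2) / U := by rw [Finset.sum_div]
      _ = 1 := by rw [← hU, div_self hU0.ne']
  have hfinal := FriedlandAux.core hm hl1 hl2 w hw0 hwnorm S (by rw [hS]; exact hones)
  have hconv : ∑ p ∈ S, w p.1 * w p.2 = (∑ p ∈ S, u p.1 * u p.2) / U := by
    rw [Finset.sum_div]
    refine Finset.sum_congr rfl fun p _ => ?_
    rw [hwdef]
    simp only
    rw [div_mul_div_comm, Real.mul_self_sqrt hU0.le]
  rw [hconv] at hfinal
  have hrle : r ≤ (∑ p ∈ S, u p.1 * u p.2) / U := (le_div_iff₀ hU0).mpr hsum1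
  exact hrle.trans hfinal
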